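/- Let f be a homogeneous polynomial of degree n in X_1,…,X_d over ℂ and let f̄ denote the polynomial obtained from f by complex-conjugating every coefficient. Then for every natural number k, T_{f̄} maps the space H_k of homogeneous degree-k polynomials into itself and the characteristic polynomial of the restriction of T_{f̄} to H_k equals the characteristic polynomial of the restriction of T_f to H_k; moreover ‖(f̄)^k‖² = ‖f^k‖² for all k. (Neither the block spectra nor the moments can distinguish a multiphoton state from its complex conjugate.) -/

import Mathlib

open MvPolynomial

/-- The differential operator `∂^α = ∏ i, (∂/∂Xᵢ)^(α i)` acting on polynomials. -/
noncomputable def partialPow {d : ℕ} (α : Fin d →₀ ℕ) :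
    Module.End ℂ (MvPolynomial (Fin d) ℂ) :=
  (List.ofFn fun i : Fin d =>
    ((pderiv i).toLinearMap ^ (α i) : Module.End ℂ (MvPolynomial (Fin d) ℂ))).prod

/-- The annihilation operator `f̄(∂) : g ↦ Σ_α conj(c_α) ∂^α g`. -/
noncomputable def annOp {d : ℕ} (f : MvPolynomial (Fin d) ℂ) :
    Module.End ℂ (MvPolynomial (Fin d) ℂ) :=
  ∑ α ∈ f.support, (starRingEnd ℂ) (coeff α f) • partialPow α

/-- `T_f : g ↦ f̄(∂)(f·g)`, the Bargmann representation of `f(a) f(a)†`. -/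
noncomputable def Tf {d : ℕ} (f : MvPolynomial (Fin d) ℂ) :
    Module.End ℂ (MvPolynomial (Fin d) ℂ) :=
  annOp f ∘ₗ LinearMap.mulLeft ℂ f

/-- The Fischer squared norm `‖f‖² = Σ_α |c_α(f)|² · α!` (a real number). -/
noncomputable def fischerNormSq {d : ℕ} (f : MvPolynomial (Fin d) ℂ) : ℝ :=
  ∑ α ∈ f.support, Complex.normSq (coeff α f) * (α.prod fun _ m => (m.factorial : ℝ))

/-- The polynomial `f̄` obtained from `f` by conjugating all coefficients. -/
noncomputable def conjPoly {d : ℕ} (f : MvPolynomial (Fin d) ℂ) : MvPolynomial (Fin d) ℂ :=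
  map (starRingEnd ℂ) f

/-- The space of homogeneous polynomials of a fixed degree is finite dimensional. -/
instance (d k : ℕ) : Module.Finite ℂ ↥(homogeneousSubmodule (Fin d) ℂ k) := by
  classical
  have hfin : {m : Fin d →₀ ℕ | m.degree = k}.Finite :=
    (Finsupp.finite_of_degree_le k).subset fun m hm => le_of_eq hm
  haveI : Finite ({m : Fin d →₀ ℕ | m.degree = k} : Set _) := hfin
  exact Module.Finite.equiv
    (((AddMonoidAlgebra.supportedEquivFinsupp _).symm).trans
      (LinearEquiv.ofEq _ _ (homogeneousSubmodule_eq_finsupp_supported (Fin d) ℂ k).symm))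

section Aux

lemma pderiv_pow_monomial {d : ℕ} (i : Fin d) (m : ℕ) (μ : Fin d →₀ ℕ) (r : ℂ) :
    ((pderiv i).toLinearMap ^ m : Module.End ℂ (MvPolynomial (Fin d) ℂ)) (monomial μ r)
      = monomial (μ - Finsupp.single i m) (r * ((μ i).descFactorial m : ℕ)) := by
  induction m generalizing μ r with
  | zero => simp
  | succ m ih =>
      rw [pow_succ, Module.End.mul_apply]
      rw [show ((pderiv i).toLinearMap : Module.End ℂ (MvPolynomial (Fin d) ℂ)) (monomial μ r)
          = pderiv i (monomial μ r) from rfl, pderiv_monomial, ih]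
      have hexp : μ - Finsupp.single i 1 - Finsupp.single i m = μ - Finsupp.single i (m + 1) := by
        ext j
        by_cases hj : j = i
        · subst hj; simp only [Finsupp.tsub_apply, Finsupp.single_eq_same]; omega
        · simp [Finsupp.tsub_apply, Finsupp.single_apply, Ne.symm hj]
      have h1 : (μ - Finsupp.single i 1 : Fin d →₀ ℕ) i = μ i - 1 := by
        rw [Finsupp.tsub_apply, Finsupp.single_eq_same]
      rw [h1]
      have hco : (r * ((μ i : ℕ)) : ℂ) * (((μ i - 1).descFactorial m : ℕ))
          = r * ((μ i).descFactorial (m + 1) : ℕ) := by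
        rw [mul_assoc]
        congr 1
        cases h : μ i with
        | zero => simp
        | succ p =>
            rw [Nat.succ_sub_one, Nat.succ_descFactorial_succ]
            push_cast; ring
      rw [hexp, hco]

lemma sum_single_apply_of_not_mem {d : ℕ} (α : Fin d →₀ ℕ) (l : List (Fin d)) (a : Fin d)
    (ha : a ∉ l) : ((l.map fun i => Finsupp.single i (α i)).sum : Fin d →₀ ℕ) a = 0 := by
  induction l with
  | nil => simp
  | cons b t iht =>
      simp only [List.map_cons, List.sum_cons, Finsupp.add_apply]
      rw [Finsupp.single_apply, if_neg, iht (fun h => ha (List.mem_cons_of_mem b h)), add_zero]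
      exact fun hb => ha (List.mem_cons.mpr (Or.inl hb.symm))

lemma list_prod_pderiv_monomial {d : ℕ} (α : Fin d →₀ ℕ) (l : List (Fin d)) (hl : l.Nodup)
    (μ : Fin d →₀ ℕ) (r : ℂ) :
    (l.map fun i => ((pderiv i).toLinearMap ^ (α i) :
        Module.End ℂ (MvPolynomial (Fin d) ℂ))).prod (monomial μ r)
      = monomial (μ - (l.map fun i => Finsupp.single i (α i)).sum)
          (r * ((l.map fun i => (μ i).descFactorial (α i)).prod : ℕ)) := by
  induction l generalizing μ r with
  | nil => simp
  | cons a l ih =>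
      have ha : a ∉ l := (List.nodup_cons.mp hl).1
      have hl' : l.Nodup := (List.nodup_cons.mp hl).2
      rw [List.map_cons, List.prod_cons, Module.End.mul_apply, ih hl', pderiv_pow_monomial]
      have hs : ((l.map fun i => Finsupp.single i (α i)).sum : Fin d →₀ ℕ) a = 0 :=
        sum_single_apply_of_not_mem α l a ha
      have hexp : μ - (l.map fun i => Finsupp.single i (α i)).sum - Finsupp.single a (α a)
          = μ - ((a :: l).map fun i => Finsupp.single i (α i)).sum := by
        rw [List.map_cons, List.sum_cons, tsub_tsub, add_comm]
      have happ : (μ - (l.map fun i => Finsupp.single i (α i)).sum : Fin d →₀ ℕ) a = μ a := by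
        rw [Finsupp.tsub_apply, hs, Nat.sub_zero]
      rw [happ, hexp]
      congr 1
      rw [List.map_cons, List.prod_cons]
      push_cast
      ring

lemma partialPow_monomial {d : ℕ} (α μ : Fin d →₀ ℕ) (r : ℂ) :
    partialPow α (monomial μ r)
      = monomial (μ - α) (r * ((∏ i, (μ i).descFactorial (α i) : ℕ) : ℂ)) := by
  rw [partialPow, List.ofFn_eq_map,
    list_prod_pderiv_monomial α (List.finRange d) (List.nodup_finRange d) μ r]
  rw [← Fin.sum_univ_def, ← Fin.prod_univ_def, Finsupp.univ_sum_single]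

lemma Tf_monomial {d : ℕ} (f : MvPolynomial (Fin d) ℂ) (β : Fin d →₀ ℕ) :
    Tf f (monomial β 1) =
      ∑ α' ∈ f.support, ∑ α ∈ f.support,
        (starRingEnd ℂ) (coeff α' f) • monomial (α + β - α')
          (coeff α f * ((∏ i, ((α + β) i).descFactorial (α' i) : ℕ) : ℂ)) := by
  have hmul : f * monomial β 1 = ∑ α ∈ f.support, monomial (α + β) (coeff α f) := by
    conv_lhs => rw [f.as_sum, Finset.sum_mul]
    refine Finset.sum_congr rfl fun α _ => ?_
    rw [monomial_mul, mul_one]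
  rw [Tf, LinearMap.comp_apply, LinearMap.mulLeft_apply, hmul, annOp, LinearMap.sum_apply]
  refine Finset.sum_congr rfl fun α' _ => ?_
  rw [LinearMap.smul_apply, map_sum, Finset.smul_sum]
  refine Finset.sum_congr rfl fun α _ => ?_
  rw [partialPow_monomial]

lemma coeff_Tf {d : ℕ} (f : MvPolynomial (Fin d) ℂ) (β γ : Fin d →₀ ℕ) :
    coeff γ (Tf f (monomial β 1)) =
      ∑ α' ∈ f.support, ∑ α ∈ f.support,
        (starRingEnd ℂ) (coeff α' f) * coeff α f *
          (if α + β - α' = γ then ((∏ i, ((α + β) i).descFactorial (α' i) : ℕ) : ℂ) else 0) := by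
  rw [Tf_monomial, coeff_sum]
  refine Finset.sum_congr rfl fun α' _ => ?_
  rw [coeff_sum]
  refine Finset.sum_congr rfl fun α _ => ?_
  rw [coeff_smul, coeff_monomial, smul_eq_mul]
  split_ifs <;> ring

lemma descFactorial_mul_factorial (c a : ℕ) :
    (c + a).descFactorial a * c.factorial = (c + a).factorial := by
  induction a with
  | zero => simp
  | succ a ih =>
      rw [show c + (a + 1) = (c + a) + 1 from rfl, Nat.succ_descFactorial_succ,
        Nat.factorial_succ, mul_assoc, ih]

lemma key_nat {d : ℕ} (α α' β γ : Fin d →₀ ℕ) :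
    (∏ i, (γ i).factorial) *
        (if α + β - α' = γ then ∏ i, ((α + β) i).descFactorial (α' i) else 0)
      = (∏ i, (β i).factorial) *
        (if α' + γ - α = β then ∏ i, ((α' + γ) i).descFactorial (α i) else 0) := by
  by_cases h : α + β = γ + α'
  · have c1 : α + β - α' = γ := by rw [h, add_tsub_cancel_right]
    have h2 : α' + γ = β + α := by rw [add_comm α' γ, ← h, add_comm α β]
    have c2 : α' + γ - α = β := by rw [h2, add_tsub_cancel_right]
    rw [if_pos c1, if_pos c2, ← Finset.prod_mul_distrib, ← Finset.prod_mul_distrib]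
    refine Finset.prod_congr rfl fun i _ => ?_
    have hi : (α + β) i = γ i + α' i := by rw [h]; rfl
    have hi2 : (α' + γ) i = β i + α i := by rw [h2]; rfl
    rw [hi, hi2, mul_comm ((γ i).factorial), mul_comm ((β i).factorial),
      descFactorial_mul_factorial, descFactorial_mul_factorial]
    rw [show γ i + α' i = β i + α i by
      have := congrArg (fun m : Fin d →₀ ℕ => m i) h
      simp only [Finsupp.add_apply] at this
      omega]
  · have z1 : (if α + β - α' = γ then ∏ i, ((α + β) i).descFactorial (α' i) else 0) = 0 := by
      split_ifs with hc
      · have : ¬ α' ≤ α + β := fun hle => h (by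
          rw [← hc, tsub_add_cancel_of_le hle])
        rw [Finsupp.le_def] at this
        push_neg at this
        obtain ⟨i, hi⟩ := this
        exact Finset.prod_eq_zero (Finset.mem_univ i)
          ((Nat.descFactorial_eq_zero_iff_lt).mpr hi)
      · rfl
    have h2 : α' + γ ≠ β + α := fun he => h (by rw [add_comm α β, ← he, add_comm α' γ])
    have z2 : (if α' + γ - α = β then ∏ i, ((α' + γ) i).descFactorial (α i) else 0) = 0 := by
      split_ifs with hc
      · have : ¬ α ≤ α' + γ := fun hle => h2 (by rw [← hc, tsub_add_cancel_of_le hle])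
        rw [Finsupp.le_def] at this
        push_neg at this
        obtain ⟨i, hi⟩ := this
        exact Finset.prod_eq_zero (Finset.mem_univ i)
          ((Nat.descFactorial_eq_zero_iff_lt).mpr hi)
      · rfl
    rw [z1, z2, mul_zero, mul_zero]

lemma Tf_selfadjoint {d : ℕ} (f : MvPolynomial (Fin d) ℂ) (β γ : Fin d →₀ ℕ) :
    ((∏ i, (γ i).factorial : ℕ) : ℂ) * coeff γ (Tf f (monomial β 1))
      = ((∏ i, (β i).factorial : ℕ) : ℂ) *
          (starRingEnd ℂ) (coeff β (Tf f (monomial γ 1))) := by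
  rw [coeff_Tf, coeff_Tf]
  simp only [map_sum, Finset.mul_sum]
  conv_rhs => rw [Finset.sum_comm]
  refine Finset.sum_congr rfl fun a _ => ?_
  refine Finset.sum_congr rfl fun b _ => ?_
  have hkey := key_nat b a β γ
  have hkey' : ((∏ i, (γ i).factorial : ℕ) : ℂ) *
        (if b + β - a = γ then ((∏ i, ((b + β) i).descFactorial (a i) : ℕ) : ℂ) else 0)
      = ((∏ i, (β i).factorial : ℕ) : ℂ) *
        (if a + γ - b = β then ((∏ i, ((a + γ) i).descFactorial (b i) : ℕ) : ℂ) else 0) := by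
    exact_mod_cast congrArg (Nat.cast : ℕ → ℂ) hkey
  simp only [map_mul, Complex.conj_conj, apply_ite (starRingEnd ℂ), map_natCast, map_zero]
  linear_combination ((starRingEnd ℂ) (coeff a f) * coeff b f) * hkey'

lemma support_conjPoly {d : ℕ} (f : MvPolynomial (Fin d) ℂ) :
    (conjPoly f).support = f.support :=
  support_map_of_injective f (starRingEnd ℂ).injective

lemma coeff_conjPoly {d : ℕ} (f : MvPolynomial (Fin d) ℂ) (α : Fin d →₀ ℕ) :
    coeff α (conjPoly f) = (starRingEnd ℂ) (coeff α f) := coeff_map _ f α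

lemma coeff_Tf_conjPoly {d : ℕ} (f : MvPolynomial (Fin d) ℂ) (β γ : Fin d →₀ ℕ) :
    coeff γ (Tf (conjPoly f) (monomial β 1))
      = (starRingEnd ℂ) (coeff γ (Tf f (monomial β 1))) := by
  rw [coeff_Tf, coeff_Tf, support_conjPoly]
  simp only [map_sum, map_mul, coeff_conjPoly, Complex.conj_conj,
    apply_ite (starRingEnd ℂ), map_natCast, map_zero]

lemma degree_of_mem_support {d m : ℕ} {p : MvPolynomial (Fin d) ℂ} (hp : p.IsHomogeneous m)
    {μ : Fin d →₀ ℕ} (hμ : μ ∈ p.support) : μ.degree = m := by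
  rw [Finsupp.degree_eq_weight_one]
  exact hp (mem_support_iff.mp hμ)

lemma degree_eq_sum_univ {d : ℕ} (μ : Fin d →₀ ℕ) : μ.degree = ∑ i, μ i :=
  Finset.sum_subset (Finset.subset_univ _)
    (fun i _ h => Finsupp.notMem_support_iff.mp h)

lemma partialPow_mem {d n k m : ℕ} (α : Fin d →₀ ℕ) (hα : α.degree = n)
    (p : MvPolynomial (Fin d) ℂ) (hp : p.IsHomogeneous m) (hm : m = n + k) :
    partialPow α p ∈ homogeneousSubmodule (Fin d) ℂ k := by
  have hps : partialPow α p = ∑ μ ∈ p.support, partialPow α (monomial μ (coeff μ p)) := by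
    conv_lhs => rw [p.as_sum]
    rw [map_sum]
  rw [hps]
  refine Submodule.sum_mem _ fun μ hμ => ?_
  rw [partialPow_monomial]
  by_cases hle : α ≤ μ
  · refine (mem_homogeneousSubmodule _ _).mpr (isHomogeneous_monomial _ ?_)
    have hdeg : (μ - α).degree + α.degree = μ.degree := by
      rw [degree_eq_sum_univ, degree_eq_sum_univ, degree_eq_sum_univ,
        ← Finset.sum_add_distrib]
      refine Finset.sum_congr rfl fun i _ => ?_
      rw [Finsupp.tsub_apply]
      exact Nat.sub_add_cancel (Finsupp.le_def.mp hle i)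
    have := degree_of_mem_support hp hμ
    omega
  · have : ∃ i, μ i < α i := by
      rw [Finsupp.le_def] at hle
      push_neg at hle
      exact hle
    obtain ⟨i, hi⟩ := this
    have hz : (∏ j, (μ j).descFactorial (α j)) = 0 :=
      Finset.prod_eq_zero (Finset.mem_univ i) (Nat.descFactorial_eq_zero_iff_lt.mpr hi)
    rw [hz]
    simp

lemma Tf_mem {d n k : ℕ} (f : MvPolynomial (Fin d) ℂ) (hf : f.IsHomogeneous n)
    (g : MvPolynomial (Fin d) ℂ) (hg : g ∈ homogeneousSubmodule (Fin d) ℂ k) :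
    Tf f g ∈ homogeneousSubmodule (Fin d) ℂ k := by
  rw [Tf, LinearMap.comp_apply, LinearMap.mulLeft_apply, annOp, LinearMap.sum_apply]
  refine Submodule.sum_mem _ fun α hα => ?_
  rw [LinearMap.smul_apply]
  refine Submodule.smul_mem _ _ ?_
  refine partialPow_mem α (degree_of_mem_support hf hα) _ (hf.mul hg) rfl


lemma charpoly_transpose' {n : Type*} [Fintype n] [DecidableEq n] (M : Matrix n n ℂ) :
    M.transpose.charpoly = M.charpoly := by
  rw [Matrix.charpoly, Matrix.charpoly, ← Matrix.det_transpose (Matrix.charmatrix M)]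
  congr 1
  ext i j
  by_cases h : i = j
  · subst h; simp
  · simp [Matrix.charmatrix_apply, Matrix.diagonal_apply, h, Ne.symm h]

lemma charpoly_units_conj' {n : Type*} [Fintype n] [DecidableEq n]
    (u : (Matrix n n ℂ)ˣ) (M : Matrix n n ℂ) :
    ((u : Matrix n n ℂ) * M * ((u⁻¹ : (Matrix n n ℂ)ˣ) : Matrix n n ℂ)).charpoly
      = M.charpoly := by
  let φ := (RingHom.mapMatrix (Polynomial.C : ℂ →+* Polynomial ℂ) :
    Matrix n n ℂ →+* Matrix n n (Polynomial ℂ))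
  let v := Units.map φ.toMonoidHom u
  have hv : (↑v : Matrix n n (Polynomial ℂ)) = ((u : Matrix n n ℂ)).map Polynomial.C := rfl
  have hvinv : (↑v⁻¹ : Matrix n n (Polynomial ℂ))
      = ((u⁻¹ : (Matrix n n ℂ)ˣ) : Matrix n n ℂ).map Polynomial.C := rfl
  have hcomm : Commute (Matrix.scalar n (Polynomial.X : Polynomial ℂ))
      (↑v : Matrix n n (Polynomial ℂ)) :=
    Matrix.scalar_commute (Polynomial.X : Polynomial ℂ) (fun r => mul_comm _ _) _
  have hscal : (↑v : Matrix n n (Polynomial ℂ)) * Matrix.scalar n (Polynomial.X : Polynomial ℂ) *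
        (↑v⁻¹ : Matrix n n (Polynomial ℂ))
      = Matrix.scalar n (Polynomial.X : Polynomial ℂ) := by
    rw [← hcomm.eq, mul_assoc]
    rw [show (↑v : Matrix n n (Polynomial ℂ)) * (↑v⁻¹ : Matrix n n (Polynomial ℂ)) = 1
      from v.mul_inv]
    rw [mul_one]
  have hch : Matrix.charmatrix ((u : Matrix n n ℂ) * M * ((u⁻¹ : (Matrix n n ℂ)ˣ) : Matrix n n ℂ))
      = (↑v : Matrix n n (Polynomial ℂ)) * Matrix.charmatrix M *
          (↑v⁻¹ : Matrix n n (Polynomial ℂ)) := by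
    rw [Matrix.charmatrix, Matrix.charmatrix]
    rw [mul_sub, sub_mul, hscal]
    congr 1
    simp only [RingHom.mapMatrix_apply, Matrix.map_mul, hv, hvinv]
  rw [Matrix.charpoly, Matrix.charpoly, hch, Matrix.det_units_conj]

lemma charpoly_eq_of_entries {ι : Type*} [Fintype ι] [DecidableEq ι]
    (M M' : Matrix ι ι ℂ) (w : ι → ℂ) (hw : ∀ i, w i ≠ 0)
    (h : ∀ i j, w i * M' i j = M j i * w j) : M'.charpoly = M.charpoly := by
  set W : Matrix ι ι ℂ := Matrix.diagonal w with hWdef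
  have hWdet : IsUnit W.det := by
    rw [hWdef, Matrix.det_diagonal]
    exact isUnit_iff_ne_zero.mpr (Finset.prod_ne_zero_iff.mpr fun i _ => hw i)
  have hu : IsUnit W := (Matrix.isUnit_iff_isUnit_det W).mpr hWdet
  have hWM : W * M' = M.transpose * W := by
    ext i j
    rw [hWdef, Matrix.diagonal_mul, Matrix.mul_diagonal, Matrix.transpose_apply]
    exact h i j
  have h0 : (↑hu.unit⁻¹ : Matrix ι ι ℂ) * (↑hu.unit : Matrix ι ι ℂ) = 1 := hu.unit.inv_mul
  have hconjM : M' = (↑hu.unit⁻¹ : Matrix ι ι ℂ) * M.transpose * (↑hu.unit : Matrix ι ι ℂ) := by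
    calc M' = ((↑hu.unit⁻¹ : Matrix ι ι ℂ) * (↑hu.unit : Matrix ι ι ℂ)) * M' := by rw [h0, one_mul]
      _ = (↑hu.unit⁻¹ : Matrix ι ι ℂ) * (W * M') := by rw [mul_assoc, hu.unit_spec]
      _ = (↑hu.unit⁻¹ : Matrix ι ι ℂ) * (M.transpose * W) := by rw [hWM]
      _ = (↑hu.unit⁻¹ : Matrix ι ι ℂ) * M.transpose * (↑hu.unit : Matrix ι ι ℂ) := by
          rw [hu.unit_spec, mul_assoc]
  rw [hconjM]
  rw [show (↑hu.unit : Matrix ι ι ℂ) = (↑(hu.unit⁻¹)⁻¹ : Matrix ι ι ℂ) by rw [inv_inv]]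
  rw [charpoly_units_conj' hu.unit⁻¹ M.transpose, charpoly_transpose']

noncomputable def bHk (d k : ℕ) :
    Module.Basis {m : Fin d →₀ ℕ | m.degree = k} ℂ (homogeneousSubmodule (Fin d) ℂ k) :=
  Module.Basis.ofRepr
    ((LinearEquiv.ofEq _ _ (homogeneousSubmodule_eq_finsupp_supported (Fin d) ℂ k)).trans
      (AddMonoidAlgebra.supportedEquivFinsupp _))

lemma bHk_repr {d k : ℕ} (x : homogeneousSubmodule (Fin d) ℂ k)
    (m : {m : Fin d →₀ ℕ | m.degree = k}) :
    (bHk d k).repr x m = coeff ↑m (↑x : MvPolynomial (Fin d) ℂ) := rfl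

lemma bHk_coe {d k : ℕ} (β : {m : Fin d →₀ ℕ | m.degree = k}) :
    ((bHk d k) β : MvPolynomial (Fin d) ℂ) = monomial (↑β) 1 := by
  have hmem : (monomial (↑β : Fin d →₀ ℕ) (1 : ℂ)) ∈ homogeneousSubmodule (Fin d) ℂ k :=
    isHomogeneous_monomial 1 β.2
  have : (bHk d k) β = ⟨monomial (↑β) 1, hmem⟩ := by
    refine (bHk d k).repr.injective ?_
    rw [Module.Basis.repr_self]
    ext m
    rw [bHk_repr]
    rw [MvPolynomial.coeff_monomial, Finsupp.single_apply]
    by_cases h : β = m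
    · subst h; simp
    · rw [if_neg (fun hc => h (Subtype.ext hc)), if_neg h]
  rw [this]

lemma toMatrix_restrict {d k : ℕ} [Fintype {m : Fin d →₀ ℕ | m.degree = k}]
    [DecidableEq {m : Fin d →₀ ℕ | m.degree = k}]
    (T : Module.End ℂ (MvPolynomial (Fin d) ℂ))
    (hT : ∀ g ∈ homogeneousSubmodule (Fin d) ℂ k, T g ∈ homogeneousSubmodule (Fin d) ℂ k)
    (γ β : {m : Fin d →₀ ℕ | m.degree = k}) :
    (LinearMap.toMatrix (bHk d k) (bHk d k) (T.restrict hT)) γ β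
      = coeff ↑γ (T (monomial ↑β 1)) := by
  rw [LinearMap.toMatrix_apply, bHk_repr]
  congr 1
  rw [LinearMap.restrict_coe_apply, bHk_coe]

end Aux

lemma fischerNormSq_conjPoly {d : ℕ} (g : MvPolynomial (Fin d) ℂ) :
    fischerNormSq (conjPoly g) = fischerNormSq g := by
  rw [fischerNormSq, fischerNormSq, support_conjPoly]
  refine Finset.sum_congr rfl fun α _ => ?_
  rw [coeff_conjPoly, Complex.normSq_conj]

/-- Neither the block spectra nor the moments distinguish a state from its
complex conjugate: for every `k`, `T_{f̄}` preserves `H_k` and the characteristic polynomial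
of its restriction to `H_k` equals that of `T_f`; moreover `‖(f̄)^k‖² = ‖f^k‖²` for all `k`. -/
theorem conjPoly_invariants (d n : ℕ) (f : MvPolynomial (Fin d) ℂ) (hf : f.IsHomogeneous n) :
    (∀ k : ℕ, ∃ (h₁ : ∀ g ∈ homogeneousSubmodule (Fin d) ℂ k,
          Tf (conjPoly f) g ∈ homogeneousSubmodule (Fin d) ℂ k)
        (h₂ : ∀ g ∈ homogeneousSubmodule (Fin d) ℂ k,
          Tf f g ∈ homogeneousSubmodule (Fin d) ℂ k),
        ((Tf (conjPoly f)).restrict h₁).charpoly = ((Tf f).restrict h₂).charpoly) ∧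
    (∀ k : ℕ, fischerNormSq ((conjPoly f) ^ k) = fischerNormSq (f ^ k)) := by
  classical
  constructor
  · intro k
    have hfin : {m : Fin d →₀ ℕ | m.degree = k}.Finite :=
      (Finsupp.finite_of_degree_le k).subset fun m hm => le_of_eq hm
    haveI : Fintype {m : Fin d →₀ ℕ | m.degree = k} := hfin.fintype
    have hconj : (conjPoly f).IsHomogeneous n := hf.map _
    have hA : ∀ g ∈ homogeneousSubmodule (Fin d) ℂ k,
        Tf (conjPoly f) g ∈ homogeneousSubmodule (Fin d) ℂ k :=
      fun g hg => Tf_mem _ hconj g hg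
    have hB : ∀ g ∈ homogeneousSubmodule (Fin d) ℂ k,
        Tf f g ∈ homogeneousSubmodule (Fin d) ℂ k :=
      fun g hg => Tf_mem _ hf g hg
    refine ⟨hA, hB, ?_⟩
    rw [← LinearMap.charpoly_toMatrix ((Tf (conjPoly f)).restrict hA) (bHk d k),
      ← LinearMap.charpoly_toMatrix ((Tf f).restrict hB) (bHk d k)]
    refine charpoly_eq_of_entries _ _
      (fun γ : {m : Fin d →₀ ℕ | m.degree = k} =>
        ((∏ i, ((γ : Fin d →₀ ℕ) i).factorial : ℕ) : ℂ))
      (fun γ => ?_) (fun γ β => ?_)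
    · exact Nat.cast_ne_zero.mpr (Finset.prod_pos fun i _ => Nat.factorial_pos _).ne'
    · rw [toMatrix_restrict _ hA γ β, toMatrix_restrict _ hB β γ, coeff_Tf_conjPoly]
      have hsa := congrArg (starRingEnd ℂ) (Tf_selfadjoint f ↑β ↑γ)
      simp only [map_mul, map_natCast, Complex.conj_conj] at hsa
      linear_combination hsa
  · intro k
    have hpow : conjPoly f ^ k = conjPoly (f ^ k) := (map_pow _ f k).symm
    rw [hpow, fischerNormSq_conjPoly]
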